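/- Fix positive integers n, k, r, t with k ≤ r ≤ n and an index i₀ ∈ {1,…,t}, and fix bits b_j ∈ ZMod 2 for all j ≠ i₀ (known to the adversary). Let S be a uniformly random subset of Fin n of cardinality k and let b_{i₀} be uniform on ZMod 2, independent of S; conditionally on (S, b_{i₀}) let x_1, …, x_t be independent with x_j uniform on {x ∈ (ZMod 2)^n : ∑_{l∈S} x l = b_j}. Consider an adaptive query adversary that in each round j selects (as a function of previously observed values) a set Q_j ⊆ Fin n with |Q_j| = r, observes the restriction of x_j to Q_j, and finally outputs a guess in ZMod 2. Then the probability that the guess equals b_{i₀} is at most 1/2 + t · (r/n)^k. -/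

import Mathlib

open Finset

/-- Uniform distribution over the size-`k` subsets of `Fin n`. -/
noncomputable def keyPMF (n k : ℕ) (hkn : k ≤ n) :
    PMF {T : Finset (Fin n) // T.card = k} :=
  letI : Nonempty {T : Finset (Fin n) // T.card = k} := by
    obtain ⟨T, -, hT⟩ := Finset.exists_subset_card_eq
      (s := (Finset.univ : Finset (Fin n))) (n := k) (by simpa using hkn)
    exact ⟨⟨T, hT⟩⟩
  PMF.uniformOfFintype _

lemma parityTuple_nonempty {n : ℕ} (t : ℕ) (S : Finset (Fin n)) (hS : S.Nonempty)
    (b : Fin t → ZMod 2) :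
    (Finset.univ.filter fun xs : Fin t → Fin n → ZMod 2 =>
      ∀ i, ∑ j ∈ S, xs i j = b i).Nonempty := by
  classical
  obtain ⟨j0, hj0⟩ := hS
  refine ⟨fun i j => if j = j0 then b i else 0, ?_⟩
  simp only [Finset.mem_filter, Finset.mem_univ, true_and]
  intro i
  rw [Finset.sum_ite_eq' S j0 fun _ => b i, if_pos hj0]

/-- The joint distribution of `t` independent database strings, each uniform
conditioned on the parity over `S` equalling the corresponding bit. -/
noncomputable def statePMF {n : ℕ} (t : ℕ) (S : Finset (Fin n)) (hS : S.Nonempty)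
    (b : Fin t → ZMod 2) : PMF (Fin t → Fin n → ZMod 2) :=
  PMF.uniformOfFinset
    (Finset.univ.filter fun xs : Fin t → Fin n → ZMod 2 => ∀ i, ∑ j ∈ S, xs i j = b i)
    (parityTuple_nonempty t S hS b)

/-- The messages produced by an `(r,t)`-compression strategy `f` on inputs `xs`:
`m i = f i (xs i) (m_1, …, m_{i-1})`. -/
def messages {n r t : ℕ}
    (f : (i : Fin t) → (Fin n → ZMod 2) → (Fin i → Fin (2 ^ r)) → Fin (2 ^ r))
    (xs : Fin t → Fin n → ZMod 2) : Fin t → Fin (2 ^ r)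
  | i => f i (xs i) fun j => messages f xs ⟨j.1, j.2.trans i.2⟩
  termination_by i => i.1
  decreasing_by all_goals exact j.2

/-- The observations of an adaptive query adversary: in round `i` it chooses a query
set `q i` as a function of the values observed in previous rounds, and observes the
restriction of `xs i` to that set (`some` on queried indices, `none` elsewhere). -/
def obs {n t : ℕ}
    (q : (i : Fin t) → (Fin i → (Fin n → Option (ZMod 2))) → Finset (Fin n))
    (xs : Fin t → Fin n → ZMod 2) : Fin t → Fin n → Option (ZMod 2)
  | i => fun l =>
      if l ∈ q i (fun j => obs q xs ⟨j.1, j.2.trans i.2⟩) then some (xs i l) else none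
  termination_by i => i.1
  decreasing_by all_goals exact j.2
section Counting

open Finset

lemma zmod2_ne_iff : ∀ x c : ZMod 2, x ≠ c ↔ x = c + 1 := by decide

lemma zmod2_add11 : ∀ z : ZMod 2, z + 1 + 1 = z := by decide

lemma zmod2_sub : ∀ a b : ZMod 2, a + 1 + (b - a) = b + 1 := by decide

variable {n : ℕ}

lemma pow_split {n : ℕ} : ∀ d : ℕ, d < n → 2 ^ (n - d) = 2 * 2 ^ (n - d - 1) := by
  intro d hd
  rw [← pow_succ']
  congr 1
  omega

lemma sum_erase_eq_sub' {S : Finset (Fin n)} {m : Fin n} (hm : m ∈ S)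
    (x : Fin n → ZMod 2) : ∑ l ∈ S \ {m}, x l = (∑ l ∈ S, x l) - x m := by
  rw [eq_sub_iff_add_eq, ← Finset.sum_sdiff (Finset.singleton_subset_iff.mpr hm),
    Finset.sum_singleton]

/-- Count of vectors with prescribed values on the domain of `w` and prescribed
parity over `S`, when `S` is not contained in that domain. -/
lemma card_parity_fixed (w : Fin n → Option (ZMod 2)) (S : Finset (Fin n))
    (hS : ¬ S ⊆ Finset.univ.filter (fun l => (w l).isSome)) (c : ZMod 2) :
    (Finset.univ.filter fun x : Fin n → ZMod 2 =>
      (∀ l v, w l = some v → x l = v) ∧ ∑ l ∈ S, x l = c).card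
      = 2 ^ (n - (Finset.univ.filter (fun l => (w l).isSome)).card - 1) := by
  classical
  set D := Finset.univ.filter (fun l => (w l).isSome) with hD
  obtain ⟨m, hmS, hmD⟩ : ∃ m, m ∈ S ∧ m ∉ D := by
    by_contra h; push_neg at h; exact hS h
  have hmw : w m = none := by
    simp only [hD, mem_filter, mem_univ, true_and] at hmD
    exact Option.not_isSome_iff_eq_none.mp hmD
  set U := (Finset.univ.filter fun x : Fin n → ZMod 2 => ∀ l v, w l = some v → x l = v)
    with hU
  have hUcard : U.card = 2 ^ (n - D.card) := by
    have hUeq : U = Fintype.piFinset (fun l => if h : (w l).isSome then {(w l).get h} else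
        Finset.univ) := by
      ext x
      simp only [hU, mem_filter, mem_univ, true_and, Fintype.mem_piFinset]
      constructor
      · intro hx l
        by_cases h : (w l).isSome
        · simp only [dif_pos h, mem_singleton]
          exact (hx l ((w l).get h) (Option.some_get h).symm).symm ▸ rfl
        · simp [dif_neg h]
      · intro hx l v hlv
        have := hx l
        rw [dif_pos (by simp [hlv] : (w l).isSome)] at this
        simpa [hlv, Finset.mem_singleton] using this
    rw [hUeq, Fintype.card_piFinset]
    have hcard : ∀ l : Fin n, ((if h : (w l).isSome then ({(w l).get h} : Finset (ZMod 2))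
        else Finset.univ)).card = if l ∈ D then 1 else 2 := by
      intro l
      by_cases h : (w l).isSome
      · simp [dif_pos h, hD, h]
      · simp [dif_neg h, hD, h]
    rw [Finset.prod_congr rfl (fun l _ => hcard l), Finset.prod_ite, Finset.prod_const,
      Finset.prod_const]
    have h1 : Finset.univ.filter (fun l : Fin n => l ∈ D) = D := by
      ext l; simp
    have h2 : (Finset.univ.filter (fun l : Fin n => l ∉ D)).card = n - D.card := by
      rw [Finset.filter_not, Finset.card_sdiff_of_subset (Finset.filter_subset _ _)]
      simp [h1]
    rw [h1, h2, one_pow, one_mul]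
  have key : ∀ c' : ZMod 2,
      (U.filter fun x => ∑ l ∈ S, x l = c').card
      = (U.filter fun x => ∑ l ∈ S, x l = c' + 1).card := by
    intro c'
    have upd_mem : ∀ c'' : ZMod 2, ∀ x ∈ (U.filter fun x => ∑ l ∈ S, x l = c''),
        Function.update x m (x m + 1) ∈ (U.filter fun x => ∑ l ∈ S, x l = c'' + 1) := by
      intro c'' x hx
      simp only [mem_filter, hU, mem_univ, true_and] at hx ⊢
      obtain ⟨hx1, hx2⟩ := hx
      refine ⟨fun l v hlv => ?_, ?_⟩
      · rcases eq_or_ne l m with rfl | hne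
        · rw [hlv] at hmw; exact absurd hmw (by simp)
        · rw [Function.update_of_ne hne]; exact hx1 l v hlv
      · rw [Finset.sum_update_of_mem hmS, sum_erase_eq_sub' hmS, hx2]
        exact zmod2_sub (x m) c''
    refine Finset.card_nbij' (fun x => Function.update x m (x m + 1))
      (fun x => Function.update x m (x m + 1)) (upd_mem c') ?_ ?_ ?_
    · intro x hx
      have := upd_mem (c' + 1) x hx
      rwa [zmod2_add11] at this
    · intro x _
      simp only [Function.update_idem, Function.update_self, zmod2_add11,
        Function.update_eq_self]
    · intro x _
      simp only [Function.update_idem, Function.update_self, zmod2_add11,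
        Function.update_eq_self]
  have hsplit : (U.filter fun x => ∑ l ∈ S, x l = c).card
      + (U.filter fun x => ∑ l ∈ S, x l = c + 1).card = U.card := by
    rw [← Finset.card_filter_add_card_filter_not (s := U)
      (fun x => ∑ l ∈ S, x l = c)]
    congr 2
    ext x
    simp only [mem_filter]
    exact and_congr_right fun _ => (zmod2_ne_iff _ _).symm
  have hDn : D.card < n := by
    have hne : D ≠ Finset.univ := fun h => hmD (h ▸ Finset.mem_univ m)
    have := Finset.card_lt_card (Finset.ssubset_univ_iff.mpr hne)
    simpa using this
  have hgoal : (Finset.univ.filter fun x : Fin n → ZMod 2 =>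
      (∀ l v, w l = some v → x l = v) ∧ ∑ l ∈ S, x l = c)
      = U.filter fun x => ∑ l ∈ S, x l = c := by
    ext x; simp only [hU, mem_filter, mem_univ, true_and, and_assoc]
  rw [hgoal]
  have h2c : 2 * (U.filter fun x => ∑ l ∈ S, x l = c).card = 2 ^ (n - D.card) := by
    rw [two_mul]
    nth_rewrite 2 [key c]
    rw [hsplit, hUcard]
  have := h2c.trans (pow_split D.card hDn)
  exact Nat.eq_of_mul_eq_mul_left (by norm_num) this

end Counting
section Obs

open Finset

variable {n t : ℕ} (q : (i : Fin t) → (Fin i → (Fin n → Option (ZMod 2))) → Finset (Fin n))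

/-- The query set used at round `i` on input `xs`. -/
def Qset (xs : Fin t → Fin n → ZMod 2) (i : Fin t) : Finset (Fin n) :=
  q i (fun j => obs q xs ⟨j.1, j.2.trans i.2⟩)

lemma obs_apply (xs : Fin t → Fin n → ZMod 2) (i : Fin t) :
    obs q xs i = fun l => if l ∈ Qset q xs i then some (xs i l) else none := by
  rw [obs]
  rfl

lemma obs_update (xs : Fin t → Fin n → ZMod 2) (i₀ : Fin t) (m : Fin n) (v : ZMod 2)
    (hm : m ∉ Qset q xs i₀) :
    obs q (Function.update xs i₀ (Function.update (xs i₀) m v)) = obs q xs := by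
  set xs' := Function.update xs i₀ (Function.update (xs i₀) m v) with hxs'
  have H : ∀ N, ∀ i : Fin t, i.1 = N → obs q xs' i = obs q xs i := by
    intro N
    induction N using Nat.strong_induction_on with
    | _ N ih =>
      intro i hi
      have hhist : (fun j : Fin i.1 => obs q xs' ⟨j.1, j.2.trans i.2⟩)
          = (fun j : Fin i.1 => obs q xs ⟨j.1, j.2.trans i.2⟩) :=
        funext fun j => ih j.1 (hi ▸ j.2) ⟨j.1, j.2.trans i.2⟩ rfl
      have hQ : Qset q xs' i = Qset q xs i := by
        unfold Qset
        rw [hhist]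
      rw [obs_apply, obs_apply, hQ]
      rcases eq_or_ne i i₀ with rfl | hne
      · funext l
        rcases eq_or_ne l m with rfl | hlm
        · rw [if_neg hm, if_neg hm]
        · by_cases hl : l ∈ Qset q xs i
          · rw [if_pos hl, if_pos hl, hxs', Function.update_self,
              Function.update_of_ne hlm]
          · rw [if_neg hl, if_neg hl]
      · rw [hxs', Function.update_of_ne hne]
  funext i
  exact H i.1 i rfl

end Obs

section Tree

open Finset

/-- Counting sequences with adaptively bounded branching. -/
lemma tree_count {γ : Type*} [DecidableEq γ] :
    ∀ (m : ℕ) (T : Finset (Fin m → γ)) (c : Fin m → ℕ),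
    (∀ (j : Fin m) (f : Fin m → γ), f ∈ T →
      ((T.filter (fun g => ∀ l : Fin m, l.1 < j.1 → g l = f l)).image (fun g => g j)).card
        ≤ c j) →
    T.card ≤ ∏ j, c j := by
  intro m
  induction m with
  | zero =>
    intro T c _
    simp only [Finset.univ_eq_empty, Finset.prod_empty]
    refine Finset.card_le_one.mpr (fun f hf g hg => ?_) |>.trans le_rfl
    funext l; exact absurd l.2 (Nat.not_lt_zero _)
  | succ m ihm =>
    intro T c hc
    rcases Finset.eq_empty_or_nonempty T with rfl | ⟨f₀, hf₀⟩
    · simp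
    -- first-coordinate values
    have hA : (T.image (fun f => f 0)).card ≤ c 0 := by
      have := hc 0 f₀ hf₀
      have hfilter : T.filter (fun g => ∀ l : Fin (m+1), l.1 < (0 : Fin (m+1)).1 → g l = f₀ l) = T := by
        apply Finset.filter_true_of_mem
        intro g _ l hl
        exact absurd hl (by simp)
      rwa [hfilter] at this
    have hcard : T.card = ∑ x ∈ T.image (fun f => f 0),
        (T.filter (fun f => f 0 = x)).card :=
      Finset.card_eq_sum_card_fiberwise (fun f hf => Finset.mem_image_of_mem _ hf)
    have hfiber : ∀ x, (T.filter (fun f => f 0 = x)).card ≤ ∏ j : Fin m, c j.succ := by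
      intro x
      set Tx := (T.filter (fun f => f 0 = x)).image (fun f => f ∘ Fin.succ) with hTx
      have hinj : (T.filter (fun f => f 0 = x)).card = Tx.card := by
        rw [hTx]
        rw [Finset.card_image_of_injOn]
        intro f hf g hg hfg
        simp only [Finset.mem_coe, Finset.mem_filter] at hf hg
        funext l
        induction l using Fin.cases with
        | zero => rw [hf.2, hg.2]
        | succ l' => exact congrFun hfg l'
      rw [hinj]
      apply ihm Tx (fun j => c j.succ)
      intro j' f' hf'
      simp only [hTx, Finset.mem_image] at hf'
      obtain ⟨h₀, hh₀, rfl⟩ := hf'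
      simp only [Finset.mem_filter] at hh₀
      have hsub : ((Tx.filter (fun g => ∀ l : Fin m, l.1 < j'.1 → g l = (h₀ ∘ Fin.succ) l)).image
          (fun g => g j'))
          ⊆ ((T.filter (fun g => ∀ l : Fin (m+1), l.1 < j'.succ.1 → g l = h₀ l)).image
          (fun g => g j'.succ)) := by
        intro y hy
        simp only [Finset.mem_image, Finset.mem_filter, hTx] at hy ⊢
        obtain ⟨g', ⟨⟨h, ⟨hhT, hh0⟩, rfl⟩, hg'pre⟩, rfl⟩ := hy
        refine ⟨h, ⟨hhT, ?_⟩, rfl⟩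
        intro l hl
        induction l using Fin.cases with
        | zero => rw [hh0, hh₀.2]
        | succ l' =>
          have : l'.1 < j'.1 := by
            simpa [Fin.val_succ] using hl
          exact hg'pre l' this
      calc ((Tx.filter _).image _).card ≤ _ := Finset.card_le_card hsub
        _ ≤ c j'.succ := hc j'.succ h₀ hh₀.1
    calc T.card = _ := hcard
      _ ≤ ∑ _x ∈ T.image (fun f => f 0), ∏ j : Fin m, c j.succ :=
          Finset.sum_le_sum (fun x _ => hfiber x)
      _ = (T.image (fun f => f 0)).card * ∏ j : Fin m, c j.succ := by
          rw [Finset.sum_const, smul_eq_mul]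
      _ ≤ c 0 * ∏ j : Fin m, c j.succ := by
          exact Nat.mul_le_mul_right _ hA
      _ = ∏ j : Fin (m+1), c j := (Fin.prod_univ_succ c).symm

end Tree
section Part2

open Finset

variable {n t : ℕ} (q : (i : Fin t) → (Fin i → (Fin n → Option (ZMod 2))) → Finset (Fin n))

lemma card_parity {n : ℕ} (S : Finset (Fin n)) (hS : S.Nonempty) (c : ZMod 2) :
    (Finset.univ.filter fun x : Fin n → ZMod 2 => ∑ l ∈ S, x l = c).card = 2 ^ (n - 1) := by
  classical
  have hD : (Finset.univ.filter fun l : Fin n => ((fun _ : Fin n => (none : Option (ZMod 2))) l).isSome)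
      = (∅ : Finset (Fin n)) := by simp
  have h := card_parity_fixed (fun _ => none) S (by
    rw [hD]
    simp [Finset.subset_empty, hS.ne_empty]) c
  rw [hD] at h
  simp only [Finset.card_empty, Nat.sub_zero] at h
  rw [← h]
  congr 1
  ext x
  simp

lemma card_filter_fin_lt {t : ℕ} (i : Fin t) :
    (Finset.univ.filter fun j : Fin t => j.1 < i.1).card = i.1 := by
  rw [Finset.card_filter]
  rw [Fin.sum_univ_eq_sum_range (fun j => if j < i.1 then 1 else 0)]
  rw [← Finset.card_filter]
  have h : Finset.filter (fun j => j < i.1) (Finset.range t) = Finset.range i.1 := by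
    ext j
    simp only [Finset.mem_filter, Finset.mem_range]
    exact ⟨fun h => h.2, fun h => ⟨h.trans i.2, h⟩⟩
  rw [h, Finset.card_range]

lemma prod_ite_fin {t : ℕ} (i : Fin t) (a b : ℕ) :
    (∏ j : Fin t, if j.1 < i.1 then a else b) = a ^ i.1 * b ^ (t - i.1) := by
  rw [Finset.prod_ite, Finset.prod_const, Finset.prod_const, card_filter_fin_lt]
  congr 2
  have : (Finset.univ.filter fun j : Fin t => ¬ j.1 < i.1).card
      = t - (Finset.univ.filter fun j : Fin t => j.1 < i.1).card := by
    rw [Finset.filter_not, Finset.card_sdiff_of_subset (Finset.filter_subset _ _)]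
    simp
  rw [this, card_filter_fin_lt]

/-- The pairs `(S, xs)` for which round `i` is the first whose query set contains `S`. -/
def pairsK (k : ℕ) (b' : Fin t → ZMod 2) (i : Fin t) :
    Finset (Finset (Fin n) × (Fin t → Fin n → ZMod 2)) :=
  Finset.univ.filter (fun p => p.1.card = k ∧ (∀ j, ∑ l ∈ p.1, p.2 j l = b' j) ∧
    p.1 ⊆ Qset q p.2 i ∧ ∀ j : Fin t, j.1 < i.1 → ¬ p.1 ⊆ Qset q p.2 j)

lemma pairsK_card_le {k r : ℕ} (hk : 0 < k) (hq : ∀ i h, (q i h).card = r)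
    (b' : Fin t → ZMod 2) (i : Fin t) :
    (pairsK q k b' i).card
      ≤ (2 ^ r) ^ i.1 * (r.choose k * ((2 ^ (n - r - 1)) ^ i.1 * (2 ^ (n - 1)) ^ (t - i.1))) := by
  classical
  set Pi := pairsK q k b' i with hPi
  -- the transcript of the first `i` rounds
  set Tr : (Fin t → Fin n → ZMod 2) → (Fin t → (Fin n → Option (ZMod 2))) :=
    fun xs j => if j.1 < i.1 then obs q xs j else fun _ => none with hTr
  set O := Pi.image (fun p => Tr p.2) with hO
  have hcard : Pi.card = ∑ o ∈ O, (Pi.filter (fun p => Tr p.2 = o)).card :=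
    Finset.card_eq_sum_card_fiberwise (fun p hp => Finset.mem_image_of_mem _ hp)
  -- each fiber is small
  have hfiber : ∀ o, (Pi.filter (fun p => Tr p.2 = o)).card
      ≤ r.choose k * ((2 ^ (n - r - 1)) ^ i.1 * (2 ^ (n - 1)) ^ (t - i.1)) := by
    intro o
    set F := Pi.filter (fun p => Tr p.2 = o) with hF
    -- the query set at round i is determined by o
    set Qi : Finset (Fin n) := q i (fun j => o ⟨j.1, j.2.trans i.2⟩) with hQi
    have hQdet : ∀ p ∈ F, Qset q p.2 i = Qi := by
      intro p hp
      simp only [hF, Finset.mem_filter] at hp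
      unfold Qset
      congr 1
      funext j
      rw [← hp.2]
      simp only [hTr]
      rw [if_pos j.2]
    have hQicard : Qi.card = r := hq _ _
    have hsum : F.card = ∑ S ∈ Finset.powersetCard k Qi,
        (F.filter (fun p => p.1 = S)).card := by
      apply Finset.card_eq_sum_card_fiberwise
      intro p hp
      have hp' := hp
      simp only [hF, hPi, pairsK, Finset.mem_coe, Finset.mem_filter] at hp'
      rw [Finset.mem_coe, Finset.mem_powersetCard]
      exact ⟨(hQdet p hp) ▸ hp'.1.2.2.2.1, hp'.1.2.1⟩
    rw [hsum]
    have hbound : ∀ S ∈ Finset.powersetCard k Qi, (F.filter (fun p => p.1 = S)).card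
        ≤ (2 ^ (n - r - 1)) ^ i.1 * (2 ^ (n - 1)) ^ (t - i.1) := by
      intro S hSmem
      rcases Finset.eq_empty_or_nonempty (F.filter (fun p => p.1 = S)) with he | ⟨p₁, hp₁⟩
      · rw [he]; simp
      -- witness facts
      have hp₁' := hp₁
      simp only [hF, Finset.mem_filter] at hp₁'
      obtain ⟨⟨hp₁F, hp₁o⟩, hp₁S⟩ := hp₁'
      have hp₁P : p₁ ∈ Pi := hp₁F
      simp only [hPi, pairsK, Finset.mem_filter] at hp₁P
      obtain ⟨-, hcardS, hpar₁, hsub₁, hmin₁⟩ := hp₁P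
      have hSne : S.Nonempty := by
        rw [← hp₁S]
        exact Finset.card_pos.mp (hcardS ▸ hk)
      -- the per-round constraint sets
      set B : (j : Fin t) → Finset (Fin n → ZMod 2) := fun j =>
        if j.1 < i.1 then
          Finset.univ.filter (fun x => (∀ l v, o j l = some v → x l = v) ∧ ∑ l ∈ S, x l = b' j)
        else Finset.univ.filter (fun x => ∑ l ∈ S, x l = b' j) with hB
      have hmapsto : ∀ p ∈ F.filter (fun p => p.1 = S), p.2 ∈ Fintype.piFinset B := by
        intro p hp
        rw [Fintype.mem_piFinset]
        intro j
        simp only [hF, Finset.mem_filter] at hp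
        obtain ⟨⟨hpF, hpo⟩, hpS⟩ := hp
        have hpP := hpF
        simp only [hPi, pairsK, Finset.mem_filter] at hpP
        obtain ⟨-, -, hpar, -, -⟩ := hpP
        simp only [hB]
        by_cases hj : j.1 < i.1
        · rw [if_pos hj]
          simp only [Finset.mem_filter, Finset.mem_univ, true_and]
          constructor
          · intro l v hlv
            have : obs q p.2 j l = some v := by
              rw [← hlv, ← hpo]
              simp only [hTr]
              rw [if_pos hj]
            rw [obs_apply] at this
            simp only at this
            by_cases hlQ : l ∈ Qset q p.2 j
            · rw [if_pos hlQ] at this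
              exact Option.some_injective _ this
            · rw [if_neg hlQ] at this
              exact absurd this (by simp)
          · rw [← hpS]; exact hpar j
        · rw [if_neg hj]
          simp only [Finset.mem_filter, Finset.mem_univ, true_and]
          rw [← hpS]; exact hpar j
      have hinj : (F.filter (fun p => p.1 = S)).card ≤ (Fintype.piFinset B).card := by
        apply Finset.card_le_card_of_injOn (fun p => p.2) (fun p hp => hmapsto p hp)
        intro p hp p' hp' hpp'
        simp only [Finset.mem_coe, Finset.mem_filter] at hp hp'
        exact Prod.ext (hp.2.trans hp'.2.symm) hpp'
      refine hinj.trans ?_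
      rw [Fintype.card_piFinset]
      -- compute each factor
      have hfac : ∀ j : Fin t, (B j).card = if j.1 < i.1 then 2 ^ (n - r - 1) else 2 ^ (n - 1) := by
        intro j
        by_cases hj : j.1 < i.1
        · rw [if_pos hj]
          simp only [hB, if_pos hj]
          -- here D j = Qset q p₁.2 j, which has card r and does not contain S
          have hDj : (Finset.univ.filter fun l => ((o j) l).isSome) = Qset q p₁.2 j := by
            ext l
            simp only [Finset.mem_filter, Finset.mem_univ, true_and]
            rw [← hp₁o]
            simp only [hTr]
            rw [if_pos hj, obs_apply]
            by_cases hlQ : l ∈ Qset q p₁.2 j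
            · simp [hlQ]
            · simp [hlQ]
          have hDcard : (Finset.univ.filter fun l => ((o j) l).isSome).card = r := by
            rw [hDj]; exact hq _ _
          have hnotsub : ¬ S ⊆ (Finset.univ.filter fun l => ((o j) l).isSome) := by
            rw [hDj, ← hp₁S]
            exact hmin₁ j hj
          rw [card_parity_fixed (o j) S hnotsub (b' j), hDcard]
        · rw [if_neg hj]
          simp only [hB, if_neg hj]
          exact card_parity S hSne (b' j)
      rw [Finset.prod_congr rfl (fun j _ => hfac j), prod_ite_fin]
    calc ∑ S ∈ Finset.powersetCard k Qi, (F.filter (fun p => p.1 = S)).card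
        ≤ ∑ _S ∈ Finset.powersetCard k Qi,
            ((2 ^ (n - r - 1)) ^ i.1 * (2 ^ (n - 1)) ^ (t - i.1)) :=
          Finset.sum_le_sum hbound
      _ = (Finset.powersetCard k Qi).card * _ := by rw [Finset.sum_const, smul_eq_mul]
      _ = r.choose k * ((2 ^ (n - r - 1)) ^ i.1 * (2 ^ (n - 1)) ^ (t - i.1)) := by
          rw [Finset.card_powersetCard, hQicard]
  -- the number of transcripts
  have hO : O.card ≤ (2 ^ r) ^ i.1 := by
    have := tree_count t O (fun j => if j.1 < i.1 then 2 ^ r else 1) ?_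
    · refine this.trans ?_
      rw [prod_ite_fin, one_pow, mul_one]
    intro j f hf
    by_cases hj : j.1 < i.1
    · -- adaptively determined query set
      set Qj : Finset (Fin n) := q j (fun l => f ⟨l.1, l.2.trans j.2⟩) with hQj
      have hsub : ((O.filter (fun g => ∀ l : Fin t, l.1 < j.1 → g l = f l)).image (fun g => g j))
          ⊆ Finset.image (fun u : Fin n → ZMod 2 => fun l => if l ∈ Qj then some (u l) else none)
              (Fintype.piFinset (fun l => if l ∈ Qj then (Finset.univ : Finset (ZMod 2)) else {0})) := by
        intro y hy
        simp only [Finset.mem_image, Finset.mem_filter] at hy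
        obtain ⟨g, ⟨hgO, hgpre⟩, rfl⟩ := hy
        simp only [hO, Finset.mem_image] at hgO
        obtain ⟨p, hpPi, rfl⟩ := hgO
        have hQeq : Qset q p.2 j = Qj := by
          unfold Qset
          rw [hQj]
          congr 1
          funext l
          rw [← hgpre ⟨l.1, l.2.trans j.2⟩ l.2]
          simp only [hTr]
          rw [if_pos (l.2.trans hj)]
        rw [Finset.mem_image]
        refine ⟨fun l => if l ∈ Qj then p.2 j l else 0, ?_, ?_⟩
        · rw [Fintype.mem_piFinset]
          intro l
          by_cases hl : l ∈ Qj
          · simp [hl]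
          · simp [hl]
        · simp only [hTr]
          rw [if_pos hj, obs_apply, hQeq]
          funext l
          by_cases hl : l ∈ Qj
          · rw [if_pos hl, if_pos hl, if_pos hl]
          · rw [if_neg hl, if_neg hl]
      calc _ ≤ _ := Finset.card_le_card hsub
        _ ≤ (Fintype.piFinset (fun l => if l ∈ Qj then (Finset.univ : Finset (ZMod 2)) else {0})).card :=
            Finset.card_image_le
        _ = 2 ^ r := by
            rw [Fintype.card_piFinset]
            have : ∀ l : Fin n, ((if l ∈ Qj then (Finset.univ : Finset (ZMod 2)) else {0})).card
                = if l ∈ Qj then 2 else 1 := by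
              intro l; by_cases hl : l ∈ Qj <;> simp [hl]
            rw [Finset.prod_congr rfl (fun l _ => this l), Finset.prod_ite, Finset.prod_const,
              Finset.prod_const, one_pow, mul_one]
            have hfil : Finset.univ.filter (fun l : Fin n => l ∈ Qj) = Qj := by ext l; simp
            rw [hfil, hq]
        _ = if j.1 < i.1 then 2 ^ r else 1 := by rw [if_pos hj]
    · -- beyond round i everything is `none`
      have hsub : ((O.filter (fun g => ∀ l : Fin t, l.1 < j.1 → g l = f l)).image (fun g => g j))
          ⊆ {fun _ => none} := by
        intro y hy
        simp only [Finset.mem_image, Finset.mem_filter] at hy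
        obtain ⟨g, ⟨hgO, -⟩, rfl⟩ := hy
        simp only [hO, Finset.mem_image] at hgO
        obtain ⟨p, -, rfl⟩ := hgO
        simp only [hTr]
        rw [if_neg hj]
        exact Finset.mem_singleton_self _
      calc _ ≤ ({fun _ => none} : Finset (Fin n → Option (ZMod 2))).card := Finset.card_le_card hsub
        _ = 1 := Finset.card_singleton _
        _ = if j.1 < i.1 then 2 ^ r else 1 := by rw [if_neg hj]
  calc Pi.card = ∑ o ∈ O, (Pi.filter (fun p => Tr p.2 = o)).card := hcard
    _ ≤ ∑ _o ∈ O, (r.choose k * ((2 ^ (n - r - 1)) ^ i.1 * (2 ^ (n - 1)) ^ (t - i.1))) :=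
        Finset.sum_le_sum (fun o _ => hfiber o)
    _ = O.card * _ := by rw [Finset.sum_const, smul_eq_mul]
    _ ≤ (2 ^ r) ^ i.1 * (r.choose k * ((2 ^ (n - r - 1)) ^ i.1 * (2 ^ (n - 1)) ^ (t - i.1))) :=
        Nat.mul_le_mul_right _ hO

end Part2
section Part1

open Finset

variable {n t : ℕ} (q : (i : Fin t) → (Fin i → (Fin n → Option (ZMod 2))) → Finset (Fin n))

lemma A_card {n t : ℕ} (q : (i : Fin t) → (Fin i → (Fin n → Option (ZMod 2))) → Finset (Fin n))
    (S : Finset (Fin n)) (hS : S.Nonempty) (b' : Fin t → ZMod 2) :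
    (Finset.univ.filter fun xs : Fin t → Fin n → ZMod 2 =>
      ∀ j, ∑ l ∈ S, xs j l = b' j).card = (2 ^ (n - 1)) ^ t := by
  classical
  have hpi : (Finset.univ.filter fun xs : Fin t → Fin n → ZMod 2 =>
      ∀ j, ∑ l ∈ S, xs j l = b' j)
      = Fintype.piFinset (fun j => Finset.univ.filter fun x : Fin n → ZMod 2 =>
          ∑ l ∈ S, x l = b' j) := by
    ext xs
    simp only [Finset.mem_filter, Finset.mem_univ, true_and, Fintype.mem_piFinset]
  rw [hpi, Fintype.card_piFinset]
  rw [Finset.prod_congr rfl (fun j _ => card_parity S hS (b' j)), Finset.prod_const,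
    Finset.card_univ, Fintype.card_fin]

variable (hn : 0 < n)

/-- The pivot coordinate. -/
noncomputable def pivot (S : Finset (Fin n)) (i₀ : Fin t)
    (xs : Fin t → Fin n → ZMod 2) : Fin n :=
  if h : (S \ Qset q xs i₀).Nonempty then (S \ Qset q xs i₀).min' h else ⟨0, hn⟩

/-- Flip the pivot bit of round `i₀`. -/
noncomputable def bitflip (S : Finset (Fin n)) (i₀ : Fin t)
    (xs : Fin t → Fin n → ZMod 2) : Fin t → Fin n → ZMod 2 :=
  Function.update xs i₀ (Function.update (xs i₀) (pivot q hn S i₀ xs)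
    (xs i₀ (pivot q hn S i₀ xs) + 1))

variable {q}

lemma bitflip_pivot_mem (S : Finset (Fin n)) (i₀ : Fin t) (xs : Fin t → Fin n → ZMod 2)
    (hgood : ¬ S ⊆ Qset q xs i₀) :
    pivot q hn S i₀ xs ∈ S \ Qset q xs i₀ := by
  unfold pivot
  rw [dif_pos (Finset.sdiff_nonempty.mpr hgood)]
  exact Finset.min'_mem _ _

lemma bitflip_obs (S : Finset (Fin n)) (i₀ : Fin t) (xs : Fin t → Fin n → ZMod 2)
    (hgood : ¬ S ⊆ Qset q xs i₀) :
    obs q (bitflip q hn S i₀ xs) = obs q xs := by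
  have hm := bitflip_pivot_mem hn S i₀ xs hgood
  rw [Finset.mem_sdiff] at hm
  exact obs_update q xs i₀ _ _ hm.2

lemma bitflip_Qset (S : Finset (Fin n)) (i₀ : Fin t) (xs : Fin t → Fin n → ZMod 2)
    (hgood : ¬ S ⊆ Qset q xs i₀) (j : Fin t) :
    Qset q (bitflip q hn S i₀ xs) j = Qset q xs j := by
  unfold Qset
  congr 1
  funext l
  rw [bitflip_obs hn S i₀ xs hgood]

lemma bitflip_bitflip (S : Finset (Fin n)) (i₀ : Fin t) (xs : Fin t → Fin n → ZMod 2)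
    (hgood : ¬ S ⊆ Qset q xs i₀) :
    bitflip q hn S i₀ (bitflip q hn S i₀ xs) = xs := by
  have hQ : S \ Qset q (bitflip q hn S i₀ xs) i₀ = S \ Qset q xs i₀ := by
    rw [bitflip_Qset hn S i₀ xs hgood]
  have hpiv : pivot q hn S i₀ (bitflip q hn S i₀ xs) = pivot q hn S i₀ xs := by
    unfold pivot
    simp only [hQ]
  calc bitflip q hn S i₀ (bitflip q hn S i₀ xs)
      = Function.update (bitflip q hn S i₀ xs) i₀
          (Function.update ((bitflip q hn S i₀ xs) i₀) (pivot q hn S i₀ xs)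
            ((bitflip q hn S i₀ xs) i₀ (pivot q hn S i₀ xs) + 1)) := by
        rw [bitflip, hpiv]
    _ = xs := by
        unfold bitflip
        simp only [Function.update_self, Function.update_idem, zmod2_add11,
          Function.update_eq_self]

lemma bitflip_parity (S : Finset (Fin n)) (i₀ : Fin t) (xs : Fin t → Fin n → ZMod 2)
    (hgood : ¬ S ⊆ Qset q xs i₀) :
    (∀ j, j ≠ i₀ → ∑ l ∈ S, bitflip q hn S i₀ xs j l = ∑ l ∈ S, xs j l)
      ∧ ∑ l ∈ S, bitflip q hn S i₀ xs i₀ l = (∑ l ∈ S, xs i₀ l) + 1 := by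
  have hm := bitflip_pivot_mem hn S i₀ xs hgood
  rw [Finset.mem_sdiff] at hm
  constructor
  · intro j hj
    unfold bitflip
    rw [Function.update_of_ne hj]
  · unfold bitflip
    simp only [Function.update_self]
    rw [Finset.sum_update_of_mem hm.1, sum_erase_eq_sub' hm.1]
    exact zmod2_sub _ _

end Part1

section Choose

lemma descFactorial_pow_le {k r n : ℕ} (hkr : k ≤ r) (hrn : r ≤ n) :
    r.descFactorial k * n ^ k ≤ n.descFactorial k * r ^ k := by
  induction k with
  | zero => simp
  | succ k ih =>
    have ih' := ih (Nat.le_of_succ_le hkr)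
    have h1 : (r - k) * n ≤ (n - k) * r := by
      rw [Nat.sub_mul, Nat.sub_mul, mul_comm n r]
      exact Nat.sub_le_sub_left (Nat.mul_le_mul_left k hrn) _
    have e1 : r.descFactorial (k+1) * n ^ (k+1)
        = ((r - k) * n) * (r.descFactorial k * n ^ k) := by
      rw [Nat.descFactorial_succ, pow_succ]; ring
    have e2 : n.descFactorial (k+1) * r ^ (k+1)
        = ((n - k) * r) * (n.descFactorial k * r ^ k) := by
      rw [Nat.descFactorial_succ, pow_succ]; ring
    rw [e1, e2]
    exact Nat.mul_le_mul h1 ih'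

lemma choose_pow_le {k r n : ℕ} (hkr : k ≤ r) (hrn : r ≤ n) :
    r.choose k * n ^ k ≤ n.choose k * r ^ k := by
  have h := descFactorial_pow_le hkr hrn
  rw [Nat.descFactorial_eq_factorial_mul_choose, Nat.descFactorial_eq_factorial_mul_choose,
    mul_assoc, mul_assoc] at h
  exact Nat.le_of_mul_le_mul_left h (Nat.factorial_pos k)

end Choose
section Global

open Finset

lemma zmod2_ite_sum : ∀ v β : ZMod 2,
    ((if v = β then (1:ℕ) else 0) + (if v = β + 1 then 1 else 0)) = 1 := by decide

lemma update_update {t : ℕ} (b : Fin t → ZMod 2) (i₀ : Fin t) (β : ZMod 2) (j : Fin t) :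
    Function.update b i₀ (β + 1) j = Function.update b i₀ β j + (if j = i₀ then 1 else 0) := by
  rcases eq_or_ne j i₀ with rfl | hj
  · rw [if_pos rfl, Function.update_self, Function.update_self]
  · rw [if_neg hj, Function.update_of_ne hj, Function.update_of_ne hj, add_zero]

variable {n t : ℕ} {q : (i : Fin t) → (Fin i → (Fin n → Option (ZMod 2))) → Finset (Fin n)}

theorem win_count {k r : ℕ} (hn : 0 < n) (hk : 0 < k)
    (hq : ∀ i h, (q i h).card = r) (hrn : r < n) (i₀ : Fin t)
    (b : Fin t → ZMod 2) (g : (Fin t → Fin n → Option (ZMod 2)) → ZMod 2) :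
    (Finset.univ.filter (fun p : Finset (Fin n) × ZMod 2 × (Fin t → Fin n → ZMod 2) =>
        p.1.card = k ∧ (∀ j, ∑ l ∈ p.1, p.2.2 j l = Function.update b i₀ p.2.1 j)
          ∧ g (obs q p.2.2) = p.2.1)).card
      ≤ n.choose k * (2 ^ (n-1)) ^ t + 2 * (t * (r.choose k * (2 ^ (n-1)) ^ t)) := by
  classical
  set M := (2 ^ (n-1) : ℕ) ^ t with hM
  set Win := Finset.univ.filter (fun p : Finset (Fin n) × ZMod 2 × (Fin t → Fin n → ZMod 2) =>
      p.1.card = k ∧ (∀ j, ∑ l ∈ p.1, p.2.2 j l = Function.update b i₀ p.2.1 j)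
        ∧ g (obs q p.2.2) = p.2.1) with hWin
  set Good := Finset.univ.filter (fun p : Finset (Fin n) × ZMod 2 × (Fin t → Fin n → ZMod 2) =>
      p.1.card = k ∧ (∀ j, ∑ l ∈ p.1, p.2.2 j l = Function.update b i₀ p.2.1 j)
        ∧ ¬ p.1 ⊆ Qset q p.2.2 i₀) with hGood
  set BadT := Finset.univ.filter (fun p : Finset (Fin n) × ZMod 2 × (Fin t → Fin n → ZMod 2) =>
      p.1.card = k ∧ (∀ j, ∑ l ∈ p.1, p.2.2 j l = Function.update b i₀ p.2.1 j)
        ∧ p.1 ⊆ Qset q p.2.2 i₀) with hBadT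
  -- Step 1 : split
  have hsplit : Win.card ≤ (Good.filter (fun p => g (obs q p.2.2) = p.2.1)).card + BadT.card := by
    refine le_trans (Finset.card_le_card ?_) (Finset.card_union_le _ _)
    intro p hp
    simp only [hWin, Finset.mem_filter, Finset.mem_univ, true_and] at hp
    obtain ⟨h1, h2, h3⟩ := hp
    rw [Finset.mem_union]
    by_cases hsub : p.1 ⊆ Qset q p.2.2 i₀
    · right
      simp only [hBadT, Finset.mem_filter, Finset.mem_univ, true_and]
      exact ⟨h1, h2, hsub⟩
    · left
      simp only [hGood, Finset.mem_filter, Finset.mem_univ, true_and]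
      exact ⟨⟨h1, h2, hsub⟩, h3⟩
  -- Step 2 : involution
  have hGoodmem : ∀ p ∈ Good, (p.1, p.2.1 + 1, bitflip q hn p.1 i₀ p.2.2) ∈ Good := by
    intro p hp
    simp only [hGood, Finset.mem_filter, Finset.mem_univ, true_and] at hp ⊢
    obtain ⟨h1, h2, h3⟩ := hp
    obtain ⟨hne, hflip⟩ := bitflip_parity hn p.1 i₀ p.2.2 h3
    refine ⟨h1, ?_, ?_⟩
    · intro j
      rcases eq_or_ne j i₀ with rfl | hj
      · rw [hflip, h2 j, Function.update_self, Function.update_self]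
      · rw [hne j hj, h2 j, Function.update_of_ne hj, Function.update_of_ne hj]
    · rw [bitflip_Qset hn p.1 i₀ p.2.2 h3]
      exact h3
  have hGoodinv : ∀ p ∈ Good,
      ((p.1, p.2.1 + 1, bitflip q hn p.1 i₀ p.2.2).1,
       (p.1, p.2.1 + 1, bitflip q hn p.1 i₀ p.2.2).2.1 + 1,
       bitflip q hn (p.1, p.2.1 + 1, bitflip q hn p.1 i₀ p.2.2).1 i₀
         (p.1, p.2.1 + 1, bitflip q hn p.1 i₀ p.2.2).2.2) = p := by
    intro p hp
    simp only [hGood, Finset.mem_filter, Finset.mem_univ, true_and] at hp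
    obtain ⟨h1, h2, h3⟩ := hp
    refine Prod.ext rfl (Prod.ext ?_ ?_)
    · simp only
      rw [zmod2_add11]
    · simp only
      rw [bitflip_bitflip hn p.1 i₀ p.2.2 h3]
  have hcorr : 2 * (Good.filter (fun p => g (obs q p.2.2) = p.2.1)).card = Good.card := by
    have hf : (Good.filter (fun p => g (obs q p.2.2) = p.2.1)).card
        = ∑ p ∈ Good, (if g (obs q p.2.2) = p.2.1 then (1:ℕ) else 0) := by
      rw [Finset.card_filter]
    have hswap : ∑ p ∈ Good, (if g (obs q p.2.2) = p.2.1 then (1:ℕ) else 0)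
        = ∑ p ∈ Good, (if g (obs q (bitflip q hn p.1 i₀ p.2.2)) = p.2.1 + 1 then (1:ℕ) else 0) := by
      refine Finset.sum_nbij' (fun p => (p.1, p.2.1 + 1, bitflip q hn p.1 i₀ p.2.2))
        (fun p => (p.1, p.2.1 + 1, bitflip q hn p.1 i₀ p.2.2)) hGoodmem hGoodmem
        hGoodinv hGoodinv ?_
      intro p hp
      simp only [hGood, Finset.mem_filter, Finset.mem_univ, true_and] at hp
      obtain ⟨h1, h2, h3⟩ := hp
      simp only
      rw [bitflip_bitflip hn p.1 i₀ p.2.2 h3, zmod2_add11]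
    have hone : ∀ p ∈ Good, (if g (obs q p.2.2) = p.2.1 then (1:ℕ) else 0)
        + (if g (obs q (bitflip q hn p.1 i₀ p.2.2)) = p.2.1 + 1 then (1:ℕ) else 0) = 1 := by
      intro p hp
      simp only [hGood, Finset.mem_filter, Finset.mem_univ, true_and] at hp
      rw [bitflip_obs hn p.1 i₀ p.2.2 hp.2.2]
      exact zmod2_ite_sum _ _
    calc 2 * (Good.filter (fun p => g (obs q p.2.2) = p.2.1)).card
        = ∑ p ∈ Good, ((if g (obs q p.2.2) = p.2.1 then (1:ℕ) else 0)
            + (if g (obs q (bitflip q hn p.1 i₀ p.2.2)) = p.2.1 + 1 then (1:ℕ) else 0)) := by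
          rw [Finset.sum_add_distrib, ← hswap, ← hf, two_mul]
      _ = ∑ _p ∈ Good, 1 := Finset.sum_congr rfl hone
      _ = Good.card := by rw [Finset.sum_const, smul_eq_mul, mul_one]
  -- Step 3 : Good is small
  have hGoodcard : Good.card ≤ 2 * (n.choose k * M) := by
    have hsub : Good ⊆ Finset.univ.filter
        (fun p : Finset (Fin n) × ZMod 2 × (Fin t → Fin n → ZMod 2) =>
          p.1.card = k ∧ (∀ j, ∑ l ∈ p.1, p.2.2 j l = Function.update b i₀ p.2.1 j)) := by
      intro p hp
      simp only [hGood, Finset.mem_filter, Finset.mem_univ, true_and] at hp ⊢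
      exact ⟨hp.1, hp.2.1⟩
    refine (Finset.card_le_card hsub).trans ?_
    set All := Finset.univ.filter
        (fun p : Finset (Fin n) × ZMod 2 × (Fin t → Fin n → ZMod 2) =>
          p.1.card = k ∧ (∀ j, ∑ l ∈ p.1, p.2.2 j l = Function.update b i₀ p.2.1 j)) with hAll
    have hfib : All.card = ∑ z ∈ (Finset.powersetCard k (Finset.univ : Finset (Fin n)) ×ˢ
        (Finset.univ : Finset (ZMod 2))), (All.filter (fun p => (p.1, p.2.1) = z)).card := by
      apply Finset.card_eq_sum_card_fiberwise
      intro p hp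
      simp only [hAll, Finset.mem_coe, Finset.mem_filter, Finset.mem_univ, true_and] at hp
      rw [Finset.mem_coe, Finset.mem_product, Finset.mem_powersetCard]
      exact ⟨⟨Finset.subset_univ _, hp.1⟩, Finset.mem_univ _⟩
    rw [hfib]
    have hfibcard : ∀ z ∈ (Finset.powersetCard k (Finset.univ : Finset (Fin n)) ×ˢ
        (Finset.univ : Finset (ZMod 2))), (All.filter (fun p => (p.1, p.2.1) = z)).card ≤ M := by
      intro z hz
      rw [Finset.mem_product, Finset.mem_powersetCard] at hz
      have hzne : z.1.Nonempty := Finset.card_pos.mp (hz.1.2 ▸ hk)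
      have : (All.filter (fun p => (p.1, p.2.1) = z)).card
          ≤ (Finset.univ.filter fun xs : Fin t → Fin n → ZMod 2 =>
              ∀ j, ∑ l ∈ z.1, xs j l = Function.update b i₀ z.2 j).card := by
        apply Finset.card_le_card_of_injOn (fun p => p.2.2)
        · intro p hp
          simp only [hAll, Finset.mem_coe, Finset.mem_filter, Finset.mem_univ, true_and] at hp ⊢
          obtain ⟨⟨h1, h2⟩, h3⟩ := hp
          intro j
          have e1 : p.1 = z.1 := congrArg Prod.fst h3
          have e2 : p.2.1 = z.2 := congrArg Prod.snd h3
          rw [← e1, ← e2]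
          exact h2 j
        · intro p hp p' hp' hpp'
          simp only [Finset.mem_coe, Finset.mem_filter] at hp hp'
          have e1 : p.1 = z.1 := congrArg Prod.fst hp.2
          have e2 : p.2.1 = z.2 := congrArg Prod.snd hp.2
          have e1' : p'.1 = z.1 := congrArg Prod.fst hp'.2
          have e2' : p'.2.1 = z.2 := congrArg Prod.snd hp'.2
          exact Prod.ext (e1.trans e1'.symm) (Prod.ext (e2.trans e2'.symm) hpp')
      refine this.trans ?_
      rw [A_card q z.1 hzne (Function.update b i₀ z.2), hM]
    calc ∑ z ∈ _, (All.filter (fun p => (p.1, p.2.1) = z)).card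
        ≤ ∑ _z ∈ (Finset.powersetCard k (Finset.univ : Finset (Fin n)) ×ˢ
            (Finset.univ : Finset (ZMod 2))), M := Finset.sum_le_sum hfibcard
      _ = (n.choose k * 2) * M := by
          rw [Finset.sum_const, smul_eq_mul, Finset.card_product, Finset.card_powersetCard]
          simp [Finset.card_univ]
      _ = 2 * (n.choose k * M) := by ring
  -- Step 4 : Bad is small
  have hBadcard : BadT.card ≤ 2 * (t * (r.choose k * M)) := by
    have hfib : BadT.card = ∑ β ∈ (Finset.univ : Finset (ZMod 2)),
        (BadT.filter (fun p => p.2.1 = β)).card :=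
      Finset.card_eq_sum_card_fiberwise (fun p _ => Finset.mem_univ _)
    have hβ : ∀ β : ZMod 2, (BadT.filter (fun p => p.2.1 = β)).card
        ≤ t * (r.choose k * M) := by
      intro β
      -- biject with pairs, then use the first-bad-round decomposition
      have hbij : (BadT.filter (fun p => p.2.1 = β)).card
          = (Finset.univ.filter (fun p : Finset (Fin n) × (Fin t → Fin n → ZMod 2) =>
              p.1.card = k ∧ (∀ j, ∑ l ∈ p.1, p.2 j l = Function.update b i₀ β j)
                ∧ p.1 ⊆ Qset q p.2 i₀)).card := by
        apply Finset.card_nbij' (fun p => (p.1, p.2.2)) (fun p => (p.1, β, p.2))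
        · intro p hp
          simp only [hBadT, Finset.mem_coe, Finset.mem_filter, Finset.mem_univ, true_and] at hp ⊢
          obtain ⟨⟨h1, h2, h3⟩, h4⟩ := hp
          exact ⟨h1, fun j => h4 ▸ h2 j, h3⟩
        · intro p hp
          simp only [Finset.mem_coe, Finset.mem_filter, Finset.mem_univ, true_and] at hp
          simp only [hBadT, Finset.mem_coe, Finset.mem_filter, Finset.mem_univ, true_and]
          first
          | exact ⟨⟨hp.1, hp.2.1, hp.2.2⟩, rfl⟩
          | exact ⟨⟨hp.1, hp.2.1, hp.2.2⟩, trivial⟩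
          | exact ⟨hp.1, hp.2.1, hp.2.2⟩
        · intro p hp
          simp only [Finset.mem_coe, hBadT, Finset.mem_filter] at hp
          obtain ⟨-, h4⟩ := hp
          exact Prod.ext rfl (Prod.ext h4.symm rfl)
        · intro p hp
          rfl
      rw [hbij]
      have hsubB : (Finset.univ.filter (fun p : Finset (Fin n) × (Fin t → Fin n → ZMod 2) =>
          p.1.card = k ∧ (∀ j, ∑ l ∈ p.1, p.2 j l = Function.update b i₀ β j)
            ∧ p.1 ⊆ Qset q p.2 i₀))
          ⊆ Finset.univ.biUnion (fun i : Fin t => pairsK q k (Function.update b i₀ β) i) := by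
        intro p hp
        simp only [Finset.mem_filter, Finset.mem_univ, true_and] at hp
        obtain ⟨h1, h2, h3⟩ := hp
        have hTne : (Finset.univ.filter (fun i : Fin t => p.1 ⊆ Qset q p.2 i)).Nonempty :=
          ⟨i₀, by simp [h3]⟩
        set istar := (Finset.univ.filter (fun i : Fin t => p.1 ⊆ Qset q p.2 i)).min' hTne
          with histar
        have histar_mem := Finset.min'_mem _ hTne
        simp only [Finset.mem_filter, Finset.mem_univ, true_and] at histar_mem
        rw [Finset.mem_biUnion]
        refine ⟨istar, Finset.mem_univ _, ?_⟩
        simp only [pairsK, Finset.mem_filter, Finset.mem_univ, true_and]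
        refine ⟨h1, h2, histar_mem, ?_⟩
        intro j hj hsubj
        have : istar ≤ j := Finset.min'_le _ _ (by simp [hsubj])
        exact absurd hj (by omega)
      refine (Finset.card_le_card hsubB).trans ?_
      refine Finset.card_biUnion_le.trans ?_
      have hper : ∀ i : Fin t, (pairsK q k (Function.update b i₀ β) i).card
          ≤ r.choose k * M := by
        intro i
        refine (pairsK_card_le q hk hq (Function.update b i₀ β) i).trans (le_of_eq ?_)
        have hmerge : (2:ℕ) ^ r * 2 ^ (n - r - 1) = 2 ^ (n - 1) := by
          rw [← pow_add]
          congr 1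
          omega
        calc (2 ^ r) ^ i.1 * (r.choose k * ((2 ^ (n - r - 1)) ^ i.1 * (2 ^ (n-1)) ^ (t - i.1)))
            = r.choose k * (((2:ℕ) ^ r * 2 ^ (n - r - 1)) ^ i.1 * (2 ^ (n-1)) ^ (t - i.1)) := by
              ring
          _ = r.choose k * ((2 ^ (n-1)) ^ i.1 * (2 ^ (n-1)) ^ (t - i.1)) := by rw [hmerge]
          _ = r.choose k * M := by
              rw [← pow_add, hM]
              congr 2
              omega
      calc ∑ i : Fin t, (pairsK q k (Function.update b i₀ β) i).card
          ≤ ∑ _i : Fin t, r.choose k * M := Finset.sum_le_sum (fun i _ => hper i)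
        _ = t * (r.choose k * M) := by
            rw [Finset.sum_const, smul_eq_mul, Finset.card_univ, Fintype.card_fin]
    calc BadT.card = _ := hfib
      _ ≤ ∑ _β ∈ (Finset.univ : Finset (ZMod 2)), t * (r.choose k * M) :=
          Finset.sum_le_sum (fun β _ => hβ β)
      _ = 2 * (t * (r.choose k * M)) := by
          rw [Finset.sum_const, smul_eq_mul]
          congr 1
  -- combine
  have hGhalf : (Good.filter (fun p => g (obs q p.2.2) = p.2.1)).card ≤ n.choose k * M := by
    omega
  omega

end Global
open scoped ENNReal in
lemma pmf_map_pair_apply {α γ δ : Type*} [Fintype α] [DecidableEq α] [DecidableEq γ]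
    [DecidableEq δ] (w : PMF α) (c' : γ) (d' : δ) (c : γ) (d : δ) (x : α) :
    (PMF.map (fun a => (c', d', a)) w) (c, d, x) = if c = c' ∧ d = d' then w x else 0 := by
  classical
  rw [PMF.map_apply, tsum_fintype]
  by_cases h : c = c' ∧ d = d'
  · obtain ⟨rfl, rfl⟩ := h
    rw [if_pos ⟨rfl, rfl⟩]
    simp [Prod.mk.injEq]
  · rw [if_neg h]
    apply Finset.sum_eq_zero
    intro a _
    rw [if_neg]
    intro hc
    rw [Prod.ext_iff] at hc
    obtain ⟨h1, h2⟩ := hc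
    rw [Prod.ext_iff] at h2
    exact h ⟨h1, h2.1⟩

open scoped ENNReal in
/-- An adaptive index-query adversary who knows Alice's bits at all
times other than `i₀` and queries `r` indices per period guesses the uniformly random
bit `b_{i₀}` with probability at most `1/2 + t (r/n)^k`. -/
theorem query_adversary_bit_security (n k r t : ℕ) (hn : 0 < n) (hk : 0 < k)
    (hr : 0 < r) (ht : 0 < t) (hkr : k ≤ r) (hrn : r ≤ n) (i₀ : Fin t)
    (b : Fin t → ZMod 2)
    (q : (i : Fin t) → (Fin i → (Fin n → Option (ZMod 2))) → Finset (Fin n))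
    (hq : ∀ i h, (q i h).card = r)
    (g : (Fin t → Fin n → Option (ZMod 2)) → ZMod 2) :
    (((keyPMF n k (hkr.trans hrn)).bind fun S =>
        (PMF.uniformOfFintype (ZMod 2)).bind fun β =>
          (statePMF t S.1 (Finset.card_pos.mp (by rw [S.2]; exact hk))
              (Function.update b i₀ β)).map fun xs => (S, β, xs)).toOuterMeasure
      {p : {T : Finset (Fin n) // T.card = k} × ZMod 2 × (Fin t → Fin n → ZMod 2) |
        g (obs q p.2.2) = p.2.1})
      ≤ ENNReal.ofReal ((1 : ℝ) / 2 + (t : ℝ) * ((r : ℝ) / (n : ℝ)) ^ k) := by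
  classical
  set P := ((keyPMF n k (hkr.trans hrn)).bind fun S =>
      (PMF.uniformOfFintype (ZMod 2)).bind fun β =>
        (statePMF t S.1 (Finset.card_pos.mp (by rw [S.2]; exact hk))
            (Function.update b i₀ β)).map fun xs => (S, β, xs)) with hP
  set s := {p : {T : Finset (Fin n) // T.card = k} × ZMod 2 × (Fin t → Fin n → ZMod 2) |
      g (obs q p.2.2) = p.2.1} with hs
  rcases lt_or_eq_of_le hrn with hrlt | hreq
  swap
  · -- the degenerate case r = n : the bound is ≥ 1
    have h1 : P.toOuterMeasure s ≤ 1 := by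
      rw [PMF.toOuterMeasure_apply]
      calc ∑' x, s.indicator (⇑P) x ≤ ∑' x, P x :=
            ENNReal.tsum_le_tsum (fun a => Set.indicator_le_self s (⇑P) a)
        _ = 1 := PMF.tsum_coe P
    refine h1.trans (ENNReal.one_le_ofReal.mpr ?_)
    have hdiv : (r : ℝ) / (n : ℝ) = 1 := by
      rw [hreq, div_self]
      exact_mod_cast hn.ne'
    rw [hdiv, one_pow, mul_one]
    have : (1:ℝ) ≤ t := by exact_mod_cast ht
    linarith
  -- main case r < n
  set C := n.choose k with hC
  set K := r.choose k with hK
  set M := ((2:ℕ) ^ (n-1)) ^ t with hM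
  have hCpos : 0 < C := Nat.choose_pos (hkr.trans hrn)
  have hMpos : 0 < M := by positivity
  -- evaluate the PMF
  have heval : ∀ p : {T : Finset (Fin n) // T.card = k} × ZMod 2 × (Fin t → Fin n → ZMod 2),
      P p = (C : ℝ≥0∞)⁻¹ * (2⁻¹ *
        (if (∀ j, ∑ l ∈ p.1.1, p.2.2 j l = Function.update b i₀ p.2.1 j)
          then ((M : ℕ) : ℝ≥0∞)⁻¹ else 0)) := by
    rintro ⟨S, β, xs⟩
    have hSne : S.1.Nonempty := Finset.card_pos.mp (by rw [S.2]; exact hk)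
    rw [hP, PMF.bind_apply, tsum_fintype]
    have hinner : ∀ S' : {T : Finset (Fin n) // T.card = k},
        ((PMF.uniformOfFintype (ZMod 2)).bind fun β' =>
          (statePMF t S'.1 (Finset.card_pos.mp (by rw [S'.2]; exact hk))
              (Function.update b i₀ β')).map fun xs' => (S', β', xs')) (S, β, xs)
        = if S = S' then 2⁻¹ *
            ((statePMF t S'.1 (Finset.card_pos.mp (by rw [S'.2]; exact hk))
              (Function.update b i₀ β)) xs) else 0 := by
      intro S'
      rw [PMF.bind_apply, tsum_fintype]
      have hterm : ∀ β' : ZMod 2,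
          (PMF.uniformOfFintype (ZMod 2)) β' *
            ((statePMF t S'.1 (Finset.card_pos.mp (by rw [S'.2]; exact hk))
                (Function.update b i₀ β')).map fun xs' => (S', β', xs')) (S, β, xs)
          = if S = S' ∧ β = β' then 2⁻¹ *
              ((statePMF t S'.1 (Finset.card_pos.mp (by rw [S'.2]; exact hk))
                (Function.update b i₀ β')) xs) else 0 := by
        intro β'
        rw [pmf_map_pair_apply, PMF.uniformOfFintype_apply]
        have hcard2 : (Fintype.card (ZMod 2)) = 2 := by decide
        rw [hcard2]
        by_cases h : S = S' ∧ β = β'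
        · rw [if_pos h, if_pos h]
          norm_cast
        · rw [if_neg h, if_neg h, mul_zero]
      rw [Finset.sum_congr rfl (fun β' _ => hterm β')]
      by_cases hSS : S = S'
      · rw [if_pos hSS]
        have hsimp : ∀ β' : ZMod 2,
            (if S = S' ∧ β = β' then 2⁻¹ *
              ((statePMF t S'.1 (Finset.card_pos.mp (by rw [S'.2]; exact hk))
                (Function.update b i₀ β')) xs) else 0)
            = if β = β' then 2⁻¹ *
              ((statePMF t S'.1 (Finset.card_pos.mp (by rw [S'.2]; exact hk))
                (Function.update b i₀ β')) xs) else 0 := by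
          intro β'
          by_cases hb : β = β'
          · rw [if_pos ⟨hSS, hb⟩, if_pos hb]
          · rw [if_neg (fun hh => hb hh.2), if_neg hb]
        rw [Finset.sum_congr rfl (fun β' _ => hsimp β'), Finset.sum_ite_eq,
          if_pos (Finset.mem_univ _)]
      · rw [if_neg hSS]
        apply Finset.sum_eq_zero
        intro β' _
        rw [if_neg (fun hh => hSS hh.1)]
    rw [Finset.sum_congr rfl (fun S' _ => by rw [hinner S'])]
    have hout : ∀ S' : {T : Finset (Fin n) // T.card = k},
        (keyPMF n k (hkr.trans hrn)) S' * (if S = S' then 2⁻¹ *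
            ((statePMF t S'.1 (Finset.card_pos.mp (by rw [S'.2]; exact hk))
              (Function.update b i₀ β)) xs) else 0)
        = if S = S' then (keyPMF n k (hkr.trans hrn)) S' * (2⁻¹ *
            ((statePMF t S'.1 (Finset.card_pos.mp (by rw [S'.2]; exact hk))
              (Function.update b i₀ β)) xs)) else 0 := by
      intro S'
      by_cases h : S = S'
      · rw [if_pos h, if_pos h]
      · rw [if_neg h, if_neg h, mul_zero]
    rw [Finset.sum_congr rfl (fun S' _ => hout S'), Finset.sum_ite_eq,
      if_pos (Finset.mem_univ _)]
    have hkey : (keyPMF n k (hkr.trans hrn)) S = (C : ℝ≥0∞)⁻¹ := by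
      have hcard : Fintype.card {T : Finset (Fin n) // T.card = k} = C := by
        have h := Fintype.card_finset_len (α := Fin n) k
        rwa [Fintype.card_fin] at h
      simp only [keyPMF, PMF.uniformOfFintype_apply]
      rw [hcard]
    have hstate : ∀ (hne : S.1.Nonempty), (statePMF t S.1 hne (Function.update b i₀ β)) xs
        = (if (∀ j, ∑ l ∈ S.1, xs j l = Function.update b i₀ β j)
            then ((M : ℕ) : ℝ≥0∞)⁻¹ else 0) := by
      intro hne
      rw [statePMF, PMF.uniformOfFinset_apply]
      rw [A_card q S.1 hne (Function.update b i₀ β)]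
      congr 1
      simp only [Finset.mem_filter, Finset.mem_univ, true_and]
    rw [hkey, hstate hSne]
  -- compute the total mass as a sum
  rw [PMF.toOuterMeasure_apply, tsum_fintype]
  have hind : ∀ p : {T : Finset (Fin n) // T.card = k} × ZMod 2 × (Fin t → Fin n → ZMod 2),
      s.indicator (⇑P) p = if ((∀ j, ∑ l ∈ p.1.1, p.2.2 j l = Function.update b i₀ p.2.1 j)
          ∧ g (obs q p.2.2) = p.2.1) then (C : ℝ≥0∞)⁻¹ * 2⁻¹ * ((M : ℕ) : ℝ≥0∞)⁻¹ else 0 := by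
    intro p
    rw [Set.indicator_apply]
    by_cases hmem : p ∈ s
    · rw [if_pos hmem, heval p]
      have hgp : g (obs q p.2.2) = p.2.1 := hmem
      by_cases hpar : (∀ j, ∑ l ∈ p.1.1, p.2.2 j l = Function.update b i₀ p.2.1 j)
      · rw [if_pos hpar, if_pos ⟨hpar, hgp⟩]
        ring
      · rw [if_neg hpar, if_neg (fun h => hpar h.1), mul_zero, mul_zero]
    · rw [if_neg hmem, if_neg]
      intro hcontra
      exact hmem hcontra.2
  rw [Finset.sum_congr rfl (fun p _ => hind p)]
  rw [← Finset.sum_filter, Finset.sum_const, nsmul_eq_mul]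
  -- identify the cardinality with the plain-finset count
  set WinSub := Finset.univ.filter
      (fun p : {T : Finset (Fin n) // T.card = k} × ZMod 2 × (Fin t → Fin n → ZMod 2) =>
        (∀ j, ∑ l ∈ p.1.1, p.2.2 j l = Function.update b i₀ p.2.1 j)
          ∧ g (obs q p.2.2) = p.2.1) with hWinSub
  set Win := Finset.univ.filter
      (fun p : Finset (Fin n) × ZMod 2 × (Fin t → Fin n → ZMod 2) =>
        p.1.card = k ∧ (∀ j, ∑ l ∈ p.1, p.2.2 j l = Function.update b i₀ p.2.1 j)
          ∧ g (obs q p.2.2) = p.2.1) with hWin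
  have hWcard : WinSub.card = Win.card := by
    apply Finset.card_bij (fun p _ => (p.1.1, p.2.1, p.2.2))
    · intro p hp
      simp only [hWinSub, Finset.mem_filter, Finset.mem_univ, true_and] at hp
      simp only [hWin, Finset.mem_filter, Finset.mem_univ, true_and]
      exact ⟨p.1.2, hp.1, hp.2⟩
    · intro p hp p' hp' hpp'
      rw [Prod.ext_iff] at hpp'
      obtain ⟨h1, h2⟩ := hpp'
      exact Prod.ext (Subtype.ext h1) h2
    · intro p hp
      simp only [hWin, Finset.mem_filter, Finset.mem_univ, true_and] at hp
      refine ⟨(⟨p.1, hp.1⟩, p.2.1, p.2.2), ?_, rfl⟩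
      simp only [hWinSub, Finset.mem_filter, Finset.mem_univ, true_and]
      exact ⟨hp.2.1, hp.2.2⟩
  have hWbound : Win.card ≤ C * M + 2 * (t * (K * M)) :=
    win_count hn hk hq hrlt i₀ b g
  have hcount : WinSub.card ≤ C * M + 2 * (t * (K * M)) := hWcard ▸ hWbound
  -- final numeric bound
  calc (WinSub.card : ℝ≥0∞) * ((C : ℝ≥0∞)⁻¹ * 2⁻¹ * ((M : ℕ) : ℝ≥0∞)⁻¹)
      ≤ ((C * M + 2 * (t * (K * M)) : ℕ) : ℝ≥0∞) * ((C : ℝ≥0∞)⁻¹ * 2⁻¹ * ((M : ℕ) : ℝ≥0∞)⁻¹) := by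
        apply mul_le_mul_left
        exact_mod_cast hcount
    _ ≤ ENNReal.ofReal ((1 : ℝ) / 2 + (t : ℝ) * ((r : ℝ) / (n : ℝ)) ^ k) := by
        have hCr : (0:ℝ) < (C:ℝ) := by exact_mod_cast hCpos
        have hMr : (0:ℝ) < (M:ℝ) := by exact_mod_cast hMpos
        have e1 : ((C * M + 2 * (t * (K * M)) : ℕ) : ℝ≥0∞)
            = ENNReal.ofReal ((C * M + 2 * (t * (K * M)) : ℕ) : ℝ) :=
          (ENNReal.ofReal_natCast _).symm
        have e2 : ((C : ℝ≥0∞))⁻¹ = ENNReal.ofReal (((C:ℕ):ℝ))⁻¹ := by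
          rw [ENNReal.ofReal_inv_of_pos hCr, ENNReal.ofReal_natCast]
        have e3 : ((2 : ℝ≥0∞))⁻¹ = ENNReal.ofReal ((2:ℝ))⁻¹ := by
          rw [ENNReal.ofReal_inv_of_pos (by norm_num : (0:ℝ) < 2)]
          norm_num
        have e4 : (((M : ℕ) : ℝ≥0∞))⁻¹ = ENNReal.ofReal (((M:ℕ):ℝ))⁻¹ := by
          rw [ENNReal.ofReal_inv_of_pos hMr, ENNReal.ofReal_natCast]
        rw [e1, e2, e3, e4, ← ENNReal.ofReal_mul (by positivity),
          ← ENNReal.ofReal_mul (by positivity), ← ENNReal.ofReal_mul (by positivity)]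
        apply ENNReal.ofReal_le_ofReal
        have hknk : (K:ℝ) / (C:ℝ) ≤ ((r:ℝ) / (n:ℝ)) ^ k := by
          have hcast : (K:ℝ) * (n:ℝ)^k ≤ (C:ℝ) * (r:ℝ)^k := by
            exact_mod_cast choose_pow_le hkr hrn
          rw [div_pow, div_le_div_iff₀ hCr (by positivity)]
          calc (K:ℝ) * (n:ℝ)^k ≤ (C:ℝ) * (r:ℝ)^k := hcast
            _ = (r:ℝ)^k * (C:ℝ) := by ring
        have ht0 : (0:ℝ) ≤ t := by positivity
        refine le_trans (le_of_eq (?_ : _ = 1/2 + (t:ℝ) * ((K:ℝ)/(C:ℝ)))) ?_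
        · push_cast
          field_simp
        · have := mul_le_mul_of_nonneg_left hknk ht0
          linarith
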